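/- Let R be a commutative noetherian ring, M a finitely generated R-module, and M* = Hom_R(M, R) its R-dual. Then the stable annihilator of M is contained in the stable annihilator of M*. -/
import Mathlib

/-- `a` lies in the stable annihilator of `M`: multiplication by `a` on `M` factors
through a finitely generated projective `R`-module. -/
def StablyAnn (R : Type) [CommRing R] (M : Type) [AddCommGroup M] [Module R M] (a : R) : Prop :=
  ∃ (P : Type) (_ : AddCommGroup P) (_ : Module R P),
    Module.Finite R P ∧ Module.Projective R P ∧
    ∃ (f : M →ₗ[R] P) (g : P →ₗ[R] M), g ∘ₗ f = a • (LinearMap.id : M →ₗ[R] M)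

/-- The stable annihilator of M is contained in the stable annihilator of the dual module Hom(M, R). -/
theorem stablyAnn_le_stablyAnn_dual (R : Type) [CommRing R] [IsNoetherianRing R]
    (M : Type) [AddCommGroup M] [Module R M] [Module.Finite R M] :
    ∀ a : R, StablyAnn R M a → StablyAnn R (M →ₗ[R] R) a := by
  rintro a ⟨P, _, _, hfin, hproj, f, g, hgf⟩
  refine ⟨Module.Dual R P, inferInstance, inferInstance, inferInstance, inferInstance,
    g.dualMap, f.dualMap, ?_⟩
  have : f.dualMap ∘ₗ g.dualMap = (g ∘ₗ f).dualMap := rfl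
  rw [this, hgf]
  ext φ m
  simp [LinearMap.dualMap, Module.Dual.transpose]
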